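/- Fix β ∈ ℝ, n ∈ ℤ, V continuous on [0,R]. For every K > 0 there exists v ∈ H with ‖v‖_H^2 > K and I_β(v) < 0, where I_β(u) = (1/2)∫_0^R { r u_r^2 + (n^2/r) u^2 + (β − V) r u^2 − (r/2) u^4 } dr. In fact the tent functions u_0(r) = (b/a) min(r, 2a−r) with R = 2a satisfy ‖u_0‖_H^2 = 4 b^2 ln 2 and I_β(u_0) ≤ b^2 (1 + n^2(2 ln 2 − 1) + (a^2/3)(β + V_0^-) − a^2 b^2/10), which tends to −∞ as b → ∞. -/

import Mathlib

open MeasureTheory Set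

/-- The action functional `I_β`. -/
noncomputable def actionIbeta (R : ℝ) (n : ℤ) (V : ℝ → ℝ) (β : ℝ) (u u' : ℝ → ℝ) : ℝ :=
  (1/2) * ∫ r in Ioo (0:ℝ) R,
    (r * u' r ^ 2 + ((n:ℝ)^2 / r) * u r ^ 2 + (β - V r) * r * u r ^ 2 - r / 2 * u r ^ 4)


lemma integral_poly (p q c0 c1 c2 c3 c4 c5 : ℝ) :
    ∫ x in p..q, (c0 + c1*x + c2*x^2 + c3*x^3 + c4*x^4 + c5*x^5) =
      (c0*q + c1*q^2/2 + c2*q^3/3 + c3*q^4/4 + c4*q^5/5 + c5*q^6/6)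
      - (c0*p + c1*p^2/2 + c2*p^3/3 + c3*p^4/4 + c4*p^5/5 + c5*p^6/6) := by
  have h : ∀ x ∈ Set.uIcc p q,
      HasDerivAt (fun x => c0*x + c1*x^2/2 + c2*x^3/3 + c3*x^4/4 + c4*x^5/5 + c5*x^6/6)
        (c0 + c1*x + c2*x^2 + c3*x^3 + c4*x^4 + c5*x^5) x := by
    intro x _
    have h0 : HasDerivAt (fun x : ℝ => c0*x) c0 x := by
      simpa using (hasDerivAt_id x).const_mul c0
    have h1 : HasDerivAt (fun x : ℝ => c1*x^2/2) (c1*x) x := by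
      have := ((hasDerivAt_pow 2 x).const_mul c1).div_const 2
      refine this.congr_deriv ?_; push_cast; ring
    have h2 : HasDerivAt (fun x : ℝ => c2*x^3/3) (c2*x^2) x := by
      have := ((hasDerivAt_pow 3 x).const_mul c2).div_const 3
      refine this.congr_deriv ?_; push_cast; ring
    have h3 : HasDerivAt (fun x : ℝ => c3*x^4/4) (c3*x^3) x := by
      have := ((hasDerivAt_pow 4 x).const_mul c3).div_const 4
      refine this.congr_deriv ?_; push_cast; ring
    have h4 : HasDerivAt (fun x : ℝ => c4*x^5/5) (c4*x^4) x := by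
      have := ((hasDerivAt_pow 5 x).const_mul c4).div_const 5
      refine this.congr_deriv ?_; push_cast; ring
    have h5 : HasDerivAt (fun x : ℝ => c5*x^6/6) (c5*x^5) x := by
      have := ((hasDerivAt_pow 6 x).const_mul c5).div_const 6
      refine this.congr_deriv ?_; push_cast; ring
    exact ((((h0.add h1).add h2).add h3).add h4).add h5
  simpa using intervalIntegral.integral_eq_sub_of_hasDerivAt h
    (Continuous.intervalIntegrable (by continuity) p q)

lemma split_Ioo {a : ℝ} (ha : 0 < a) (f g1 g2 : ℝ → ℝ)
    (h1 : Set.EqOn f g1 (Icc 0 a)) (h2 : Set.EqOn f g2 (Icc a (2*a)))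
    (hg1 : IntervalIntegrable g1 volume 0 a) (hg2 : IntervalIntegrable g2 volume a (2*a)) :
    ∫ r in Ioo (0:ℝ) (2*a), f r = (∫ r in (0:ℝ)..a, g1 r) + ∫ r in a..(2*a), g2 r := by
  have ha2 : (0:ℝ) ≤ a := ha.le
  have haa : a ≤ 2*a := by linarith
  have e1 : Set.uIcc (0:ℝ) a = Icc 0 a := uIcc_of_le ha2
  have e2 : Set.uIcc a (2*a) = Icc a (2*a) := uIcc_of_le haa
  have hf1 : IntervalIntegrable f volume 0 a := by
    rw [intervalIntegrable_iff_integrableOn_Ioc_of_le ha2] at hg1 ⊢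
    exact hg1.congr_fun (fun x hx => (h1 (Ioc_subset_Icc_self hx)).symm) measurableSet_Ioc
  have hf2 : IntervalIntegrable f volume a (2*a) := by
    rw [intervalIntegrable_iff_integrableOn_Ioc_of_le haa] at hg2 ⊢
    exact hg2.congr_fun (fun x hx => (h2 (Ioc_subset_Icc_self hx)).symm) measurableSet_Ioc
  rw [← MeasureTheory.integral_Ioc_eq_integral_Ioo,
    ← intervalIntegral.integral_of_le (by linarith : (0:ℝ) ≤ 2*a),
    ← intervalIntegral.integral_add_adjacent_intervals hf1 hf2,
    intervalIntegral.integral_congr (show Set.EqOn f g1 (Set.uIcc 0 a) by rw [e1]; exact h1),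
    intervalIntegral.integral_congr (show Set.EqOn f g2 (Set.uIcc a (2*a)) by rw [e2]; exact h2)]

lemma invpoly_contOn {a : ℝ} (ha : 0 < a) (k c0 c1 c2 c3 c4 c5 : ℝ) :
    ContinuousOn (fun x : ℝ => k*(1/x) + (c0 + c1*x + c2*x^2 + c3*x^3 + c4*x^4 + c5*x^5))
      (Set.uIcc a (2*a)) := by
  have h0 : ∀ x ∈ Set.uIcc a (2*a), x ≠ 0 := by
    intro x hx
    rw [Set.uIcc_of_le (by linarith)] at hx
    exact ne_of_gt (lt_of_lt_of_le ha hx.1)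
  exact ((continuousOn_const.div continuousOn_id h0).const_smul k).add
    (Continuous.continuousOn (by continuity))

lemma invpoly_intble {a : ℝ} (ha : 0 < a) (k c0 c1 c2 c3 c4 c5 : ℝ) :
    IntervalIntegrable (fun x : ℝ => k*(1/x) + (c0 + c1*x + c2*x^2 + c3*x^3 + c4*x^4 + c5*x^5))
      volume a (2*a) :=
  (invpoly_contOn ha k c0 c1 c2 c3 c4 c5).intervalIntegrable

lemma integral_invpoly {a : ℝ} (ha : 0 < a) (k c0 c1 c2 c3 c4 c5 : ℝ) :
    ∫ x in a..(2*a), (k*(1/x) + (c0 + c1*x + c2*x^2 + c3*x^3 + c4*x^4 + c5*x^5)) =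
      k*Real.log 2 + ((c0*(2*a) + c1*(2*a)^2/2 + c2*(2*a)^3/3 + c3*(2*a)^4/4 + c4*(2*a)^5/5 + c5*(2*a)^6/6)
      - (c0*a + c1*a^2/2 + c2*a^3/3 + c3*a^4/4 + c4*a^5/5 + c5*a^6/6)) := by
  have h0 : (0:ℝ) ∉ Set.uIcc a (2*a) := by
    rw [Set.uIcc_of_le (by linarith)]
    intro h
    exact absurd h.1 (by linarith)
  have hk : IntervalIntegrable (fun x : ℝ => k*(1/x)) volume a (2*a) := by
    apply ContinuousOn.intervalIntegrable
    refine continuousOn_const.mul (continuousOn_const.div continuousOn_id ?_)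
    intro x hx hx0
    exact h0 (hx0 ▸ hx)
  rw [intervalIntegral.integral_add hk (Continuous.intervalIntegrable (by continuity) _ _),
    intervalIntegral.integral_const_mul, integral_one_div h0, integral_poly,
    show (2*a)/a = 2 by field_simp]

lemma tent_norm {a b : ℝ} (ha : 0 < a) :
    ∫ r in Ioo (0:ℝ) (2*a),
      (r * (if r < a then b/a else -(b/a)) ^ 2 + ((b/a) * min r (2*a - r)) ^ 2 / r)
      = 4*b^2*Real.log 2 := by
  rw [split_Ioo ha _
      (fun r => 0 + (2*(b/a)^2)*r + 0*r^2 + 0*r^3 + 0*r^4 + 0*r^5)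
      (fun r => (4*a^2*(b/a)^2)*(1/r)
        + ((-(4*a*(b/a)^2)) + (2*(b/a)^2)*r + 0*r^2 + 0*r^3 + 0*r^4 + 0*r^5))
      ?_ ?_ (Continuous.intervalIntegrable (by continuity) _ _) (invpoly_intble ha _ _ _ _ _ _ _),
    integral_poly, integral_invpoly ha]
  · have ha' := ha.ne'
    field_simp
    ring
  · intro r hr
    have hm : min r (2*a - r) = r := min_eq_left (by linarith [hr.1, hr.2])
    have hsq : (if r < a then b/a else -(b/a))^2 = (b/a)^2 := by split_ifs <;> ring
    simp only [hm, hsq]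
    rcases eq_or_lt_of_le hr.1 with h|h
    · rw [← h]; simp
    · field_simp
      ring
  · intro r hr
    have hr0 : 0 < r := lt_of_lt_of_le ha hr.1
    have hm : min r (2*a - r) = 2*a - r := min_eq_right (by linarith [hr.1])
    have hsq : (if r < a then b/a else -(b/a))^2 = (b/a)^2 := by split_ifs <;> ring
    simp only [hm, hsq]
    have := hr0.ne'
    field_simp
    ring

set_option maxHeartbeats 2000000 in
lemma tent_action {a : ℝ} (ha : 0 < a) (n : ℤ) (V : ℝ → ℝ)
    (hV : ContinuousOn V (Icc 0 (2*a))) (β Vm : ℝ)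
    (hVub : ∀ r ∈ Icc (0:ℝ) (2*a), -V r ≤ Vm) (b : ℝ) :
    actionIbeta (2*a) n V β (fun r => (b/a) * min r (2*a - r))
      (fun r => if r < a then b/a else -(b/a)) ≤
      b^2*(1 + (n:ℝ)^2*(2*Real.log 2 - 1) + a^2/3*(β+Vm) - a^2*b^2/10) := by
  have ha' : a ≠ 0 := ha.ne'
  obtain ⟨M, hM⟩ := (isCompact_Icc (a := (0:ℝ)) (b := 2*a)).exists_bound_of_continuousOn hV
  have hM0 : 0 ≤ M := le_trans (norm_nonneg _) (hM 0 ⟨le_refl 0, by linarith⟩)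
  have hu0cont : Continuous (fun r : ℝ => (b/a) * min r (2*a - r)) := by continuity
  have ht2 : IntegrableOn (fun r : ℝ => ((n:ℝ)^2 / r) * ((b/a) * min r (2*a - r)) ^ 2)
      (Ioc 0 (2*a)) volume := by
    refine Measure.integrableOn_of_bounded (M := (n:ℝ)^2*(b/a)^2*a) measure_Ioc_lt_top.ne
      (((measurable_const.div measurable_id).mul
        ((hu0cont.pow 2).measurable)).aestronglyMeasurable) ?_
    rw [ae_restrict_iff' measurableSet_Ioc]
    apply ae_of_all
    intro r hr
    have hr0 : 0 < r := hr.1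
    set m := min r (2*a - r) with hm
    have hm0 : 0 ≤ m := le_min hr0.le (by linarith [hr.2])
    have hmr : m ≤ r := min_le_left _ _
    have hma : m ≤ a := by
      rcases le_total r (2*a - r) with h|h
      · rw [hm, min_eq_left h]; linarith
      · rw [hm, min_eq_right h]; linarith
    rw [Real.norm_eq_abs, abs_of_nonneg
      (mul_nonneg (div_nonneg (sq_nonneg _) hr0.le) (sq_nonneg _))]
    rw [div_mul_eq_mul_div, div_le_iff₀ hr0]
    have key : m*m ≤ a*r := mul_le_mul hma hmr hm0 ha.le
    nlinarith [mul_le_mul_of_nonneg_left key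
      (mul_nonneg (sq_nonneg (n:ℝ)) (sq_nonneg (b/a)))]
  have ht1 : IntegrableOn (fun r : ℝ => r * (b/a)^2) (Ioc 0 (2*a)) volume :=
    (continuous_id.mul continuous_const).integrableOn_Ioc
  have ht4 : IntegrableOn (fun r : ℝ => r / 2 * ((b/a) * min r (2*a - r)) ^ 4)
      (Ioc 0 (2*a)) volume :=
    ((continuous_id.div_const 2).mul (hu0cont.pow 4)).integrableOn_Ioc
  have ht3' : IntegrableOn (fun r : ℝ => (β + Vm) * r * ((b/a) * min r (2*a - r)) ^ 2)
      (Ioc 0 (2*a)) volume :=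
    ((continuous_const.mul continuous_id).mul (hu0cont.pow 2)).integrableOn_Ioc
  have ht3V : IntegrableOn (fun r : ℝ => (β - V r) * r * ((b/a) * min r (2*a - r)) ^ 2)
      (Ioc 0 (2*a)) volume := by
    have hmeas : AEStronglyMeasurable
        (fun r : ℝ => (β - V r) * r * ((b/a) * min r (2*a - r)) ^ 2)
        (volume.restrict (Ioc 0 (2*a))) := by
      apply ContinuousOn.aestronglyMeasurable _ measurableSet_Ioc
      exact ((continuousOn_const.sub (hV.mono Ioc_subset_Icc_self)).mul continuousOn_id).mul
        ((hu0cont.continuousOn).pow 2)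
    have hconst : IntegrableOn (fun _ : ℝ => (|β|+M)*(2*a)*((b/a)^2*a^2)) (Ioc 0 (2*a)) volume :=
      integrableOn_const measure_Ioc_lt_top.ne
    apply Integrable.mono' hconst hmeas
    rw [ae_restrict_iff' measurableSet_Ioc]
    apply ae_of_all
    intro r hr
    set m := min r (2*a - r) with hm
    have hm0 : 0 ≤ m := le_min hr.1.le (by linarith [hr.2])
    have hma : m ≤ a := by
      rcases le_total r (2*a - r) with h|h
      · rw [hm, min_eq_left h]; linarith
      · rw [hm, min_eq_right h]; linarith
    have hβV : |β - V r| ≤ |β| + M := by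
      calc |β - V r| ≤ |β| + |V r| := by
            rw [sub_eq_add_neg]
            exact (abs_add_le _ _).trans (by rw [abs_neg])
        _ ≤ |β| + M := by
            have := hM r ⟨hr.1.le, hr.2⟩
            rw [Real.norm_eq_abs] at this
            linarith
    have habsr : |r| ≤ 2*a := by rw [abs_of_nonneg hr.1.le]; exact hr.2
    have hcm2 : |((b/a)*m)^2| ≤ (b/a)^2*a^2 := by
      rw [abs_of_nonneg (sq_nonneg _), show ((b/a)*m)^2 = (b/a)^2*m^2 by ring]
      exact mul_le_mul_of_nonneg_left (pow_le_pow_left₀ hm0 hma 2) (sq_nonneg _)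
    rw [Real.norm_eq_abs, abs_mul, abs_mul]
    exact mul_le_mul
      (mul_le_mul hβV habsr (abs_nonneg _) (add_nonneg (abs_nonneg _) hM0))
      hcm2 (abs_nonneg _)
      (mul_nonneg (add_nonneg (abs_nonneg _) hM0) (by linarith))
  have hFint : IntegrableOn (fun r : ℝ => r * (b/a)^2
      + ((n:ℝ)^2 / r) * ((b/a) * min r (2*a - r)) ^ 2
      + (β - V r) * r * ((b/a) * min r (2*a - r)) ^ 2
      - r / 2 * ((b/a) * min r (2*a - r)) ^ 4) (Ioc 0 (2*a)) volume :=
    ((ht1.add ht2).add ht3V).sub ht4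
  have hGint : IntegrableOn (fun r : ℝ => r * (b/a)^2
      + ((n:ℝ)^2 / r) * ((b/a) * min r (2*a - r)) ^ 2
      + (β + Vm) * r * ((b/a) * min r (2*a - r)) ^ 2
      - r / 2 * ((b/a) * min r (2*a - r)) ^ 4) (Ioc 0 (2*a)) volume :=
    ((ht1.add ht2).add ht3').sub ht4
  have hle : (∫ r in Ioo (0:ℝ) (2*a), (r * (b/a)^2
      + ((n:ℝ)^2 / r) * ((b/a) * min r (2*a - r)) ^ 2
      + (β - V r) * r * ((b/a) * min r (2*a - r)) ^ 2
      - r / 2 * ((b/a) * min r (2*a - r)) ^ 4))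
      ≤ ∫ r in Ioo (0:ℝ) (2*a), (r * (b/a)^2
      + ((n:ℝ)^2 / r) * ((b/a) * min r (2*a - r)) ^ 2
      + (β + Vm) * r * ((b/a) * min r (2*a - r)) ^ 2
      - r / 2 * ((b/a) * min r (2*a - r)) ^ 4) := by
    apply setIntegral_mono_on (hFint.mono_set Ioo_subset_Ioc_self)
      (hGint.mono_set Ioo_subset_Ioc_self) measurableSet_Ioo
    intro r hr
    have hVr : -V r ≤ Vm := hVub r ⟨hr.1.le, hr.2.le⟩
    have hru : 0 ≤ r * ((b/a) * min r (2*a - r)) ^ 2 := mul_nonneg hr.1.le (sq_nonneg _)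
    have : (β - V r) * (r * ((b/a) * min r (2*a - r)) ^ 2)
        ≤ (β + Vm) * (r * ((b/a) * min r (2*a - r)) ^ 2) :=
      mul_le_mul_of_nonneg_right (by linarith) hru
    nlinarith [this]
  have hGval : (∫ r in Ioo (0:ℝ) (2*a), (r * (b/a)^2
      + ((n:ℝ)^2 / r) * ((b/a) * min r (2*a - r)) ^ 2
      + (β + Vm) * r * ((b/a) * min r (2*a - r)) ^ 2
      - r / 2 * ((b/a) * min r (2*a - r)) ^ 4))
      = (∫ r in (0:ℝ)..a, (0 + ((b/a)^2 + (n:ℝ)^2*(b/a)^2)*r + 0*r^2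
          + ((β+Vm)*(b/a)^2)*r^3 + 0*r^4 + (-((b/a)^4/2))*r^5))
        + ∫ r in a..(2*a), ((4*a^2*(n:ℝ)^2*(b/a)^2)*(1/r)
          + ((-(4*a*(n:ℝ)^2*(b/a)^2))
            + ((b/a)^2 + (n:ℝ)^2*(b/a)^2 + 4*a^2*(β+Vm)*(b/a)^2 - 8*a^4*(b/a)^4)*r
            + ((-(4*a*(β+Vm)*(b/a)^2)) + 16*a^3*(b/a)^4)*r^2
            + ((β+Vm)*(b/a)^2 - 12*a^2*(b/a)^4)*r^3
            + (4*a*(b/a)^4)*r^4 + (-((b/a)^4/2))*r^5)) := by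
    apply split_Ioo ha _ _ _ ?_ ?_
      (Continuous.intervalIntegrable (by fun_prop) _ _) (invpoly_intble ha _ _ _ _ _ _ _)
    · intro r hr
      have hm : min r (2*a - r) = r := min_eq_left (by linarith [hr.1, hr.2])
      simp only [hm]
      rcases eq_or_lt_of_le hr.1 with h|h
      · rw [← h]; simp
      · field_simp
        ring
    · intro r hr
      have hr0 : 0 < r := lt_of_lt_of_le ha hr.1
      have hm : min r (2*a - r) = 2*a - r := min_eq_right (by linarith [hr.1])
      simp only [hm]
      have := hr0.ne'
      field_simp
      ring
  have hFeq : ∀ r : ℝ, (r * (if r < a then b/a else -(b/a)) ^ 2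
      + ((n:ℝ)^2 / r) * ((b/a) * min r (2*a - r)) ^ 2
      + (β - V r) * r * ((b/a) * min r (2*a - r)) ^ 2
      - r / 2 * ((b/a) * min r (2*a - r)) ^ 4)
      = (r * (b/a)^2
      + ((n:ℝ)^2 / r) * ((b/a) * min r (2*a - r)) ^ 2
      + (β - V r) * r * ((b/a) * min r (2*a - r)) ^ 2
      - r / 2 * ((b/a) * min r (2*a - r)) ^ 4) := by
    intro r; split_ifs <;> ring
  rw [actionIbeta]
  simp only [hFeq]
  rw [hGval, integral_poly, integral_invpoly ha] at hle
  have hhalf : (1/2 : ℝ) * ((0*a + ((b/a)^2 + (n:ℝ)^2*(b/a)^2)*a^2/2 + 0*a^3/3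
        + ((β+Vm)*(b/a)^2)*a^4/4 + 0*a^5/5 + (-((b/a)^4/2))*a^6/6)
      - (0*0 + ((b/a)^2 + (n:ℝ)^2*(b/a)^2)*0^2/2 + 0*0^3/3
        + ((β+Vm)*(b/a)^2)*0^4/4 + 0*0^5/5 + (-((b/a)^4/2))*0^6/6)
      + ((4*a^2*(n:ℝ)^2*(b/a)^2)*Real.log 2 +
        (((-(4*a*(n:ℝ)^2*(b/a)^2))*(2*a)
          + ((b/a)^2 + (n:ℝ)^2*(b/a)^2 + 4*a^2*(β+Vm)*(b/a)^2 - 8*a^4*(b/a)^4)*(2*a)^2/2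
          + ((-(4*a*(β+Vm)*(b/a)^2)) + 16*a^3*(b/a)^4)*(2*a)^3/3
          + ((β+Vm)*(b/a)^2 - 12*a^2*(b/a)^4)*(2*a)^4/4
          + (4*a*(b/a)^4)*(2*a)^5/5 + (-((b/a)^4/2))*(2*a)^6/6)
        - ((-(4*a*(n:ℝ)^2*(b/a)^2))*a
          + ((b/a)^2 + (n:ℝ)^2*(b/a)^2 + 4*a^2*(β+Vm)*(b/a)^2 - 8*a^4*(b/a)^4)*a^2/2
          + ((-(4*a*(β+Vm)*(b/a)^2)) + 16*a^3*(b/a)^4)*a^3/3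
          + ((β+Vm)*(b/a)^2 - 12*a^2*(b/a)^4)*a^4/4
          + (4*a*(b/a)^4)*a^5/5 + (-((b/a)^4/2))*a^6/6))))
      = b^2*(1 + (n:ℝ)^2*(2*Real.log 2 - 1) + a^2/3*(β+Vm) - a^2*b^2/10) := by
    field_simp
    ring
  linarith [hle, hhalf.symm.le, hhalf.le]

/-- for every `K > 0` there is `v ∈ H` with `‖v‖_H² > K` and `I_β(v) < 0`;
in fact the tent functions `u₀(r) = (b/a)min(r, 2a−r)` (with `R = 2a`) satisfy
`‖u₀‖_H² = 4b² ln 2` and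
`I_β(u₀) ≤ b²(1 + n²(2 ln 2 − 1) + (a²/3)(β + V₀⁻) − a²b²/10)`, which `→ −∞` as `b → ∞`. -/
theorem stmt14 (a : ℝ) (ha : 0 < a) (R : ℝ) (hRa : R = 2 * a) (n : ℤ)
    (V : ℝ → ℝ) (hV : ContinuousOn V (Icc 0 R)) (β : ℝ) (Vm : ℝ)
    (hVm : IsGreatest ((fun r => max (-V r) 0) '' Icc (0:ℝ) R) Vm) :
    (∀ K > (0:ℝ), ∃ v v' : ℝ → ℝ,
      (∀ x ∈ Ioo (0:ℝ) R, x ≠ a → HasDerivAt v (v' x) x) ∧ v 0 = 0 ∧ v R = 0 ∧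
      K < ∫ r in Ioo (0:ℝ) R, (r * v' r ^ 2 + v r ^ 2 / r) ∧
      actionIbeta R n V β v v' < 0) ∧
    ∀ b > (0:ℝ), ∀ u0 u0' : ℝ → ℝ,
      u0 = (fun r => (b / a) * min r (2 * a - r)) →
      u0' = (fun r => if r < a then b / a else -(b / a)) →
      (∫ r in Ioo (0:ℝ) R, (r * u0' r ^ 2 + u0 r ^ 2 / r)) = 4 * b ^ 2 * Real.log 2 ∧
      actionIbeta R n V β u0 u0' ≤
        b ^ 2 * (1 + (n:ℝ)^2 * (2 * Real.log 2 - 1) + a ^ 2 / 3 * (β + Vm)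
          - a ^ 2 * b ^ 2 / 10) := by
  subst hRa
  have hVub : ∀ r ∈ Icc (0:ℝ) (2*a), -V r ≤ Vm := fun r hr =>
    le_trans (le_max_left _ _) (hVm.2 ⟨r, hr, rfl⟩)
  have hpart2 : ∀ b : ℝ, ∀ u0 u0' : ℝ → ℝ,
      u0 = (fun r => (b / a) * min r (2 * a - r)) →
      u0' = (fun r => if r < a then b / a else -(b / a)) →
      (∫ r in Ioo (0:ℝ) (2*a), (r * u0' r ^ 2 + u0 r ^ 2 / r)) = 4 * b ^ 2 * Real.log 2 ∧
      actionIbeta (2*a) n V β u0 u0' ≤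
        b ^ 2 * (1 + (n:ℝ)^2 * (2 * Real.log 2 - 1) + a ^ 2 / 3 * (β + Vm)
          - a ^ 2 * b ^ 2 / 10) := by
    intro b u0 u0' hu0 hu0'
    subst hu0 hu0'
    constructor
    · simpa using tent_norm (a := a) (b := b) ha
    · simpa using tent_action ha n V hV β Vm hVub b
  refine ⟨?_, fun b _ u0 u0' hu0 hu0' => hpart2 b u0 u0' hu0 hu0'⟩
  intro K hK
  have hlog : 0 < Real.log 2 := Real.log_pos (by norm_num)
  set C0 : ℝ := 1 + (n:ℝ)^2 * (2 * Real.log 2 - 1) + a ^ 2 / 3 * (β + Vm) with hC0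
  set M0 : ℝ := max (max (K/(4*Real.log 2)) (10*C0/a^2)) 0 with hM0def
  have hM0 : 0 ≤ M0 := le_max_right _ _
  set b : ℝ := Real.sqrt M0 + 1 with hbdef
  have hbpos : 0 < b := by positivity
  have hb2 : M0 < b^2 := by
    have h1 : Real.sqrt M0 ^ 2 = M0 := Real.sq_sqrt hM0
    nlinarith [Real.sqrt_nonneg M0]
  clear_value C0 M0 b
  obtain ⟨hnorm, haction⟩ := hpart2 b _ _ rfl rfl
  refine ⟨fun r => (b/a) * min r (2*a - r), fun r => if r < a then b/a else -(b/a),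
    ?_, ?_, ?_, ?_, ?_⟩
  · intro x hx hxa
    rcases lt_or_gt_of_ne hxa with h|h
    · have hev : (fun r => (b/a) * min r (2*a - r)) =ᶠ[nhds x] fun r => (b/a)*r := by
        filter_upwards [Iio_mem_nhds h] with r hr
        rw [min_eq_left (by linarith [mem_Iio.1 hr])]
      have hd : HasDerivAt (fun r : ℝ => (b/a)*r) (b/a) x := by
        simpa using (hasDerivAt_id x).const_mul (b/a)
      have := hd.congr_of_eventuallyEq hev
      simpa [if_pos h] using this
    · have hev : (fun r => (b/a) * min r (2*a - r)) =ᶠ[nhds x] fun r => (b/a)*(2*a - r) := by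
        filter_upwards [Ioi_mem_nhds h] with r hr
        rw [min_eq_right (by linarith [mem_Ioi.1 hr])]
      have hd : HasDerivAt (fun r : ℝ => (b/a)*(2*a - r)) (-(b/a)) x := by
        have := ((hasDerivAt_id x).const_sub (2*a)).const_mul (b/a)
        refine this.congr_deriv ?_
        ring
      have := hd.congr_of_eventuallyEq hev
      simpa [if_neg (not_lt.2 h.le)] using this
  · show (b/a) * min 0 (2*a - 0) = 0
    rw [min_eq_left (by linarith : (0:ℝ) ≤ 2*a - 0), mul_zero]
  · show (b/a) * min (2*a) (2*a - (2*a)) = 0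
    rw [min_eq_right (by linarith : 2*a - (2*a) ≤ 2*a),
      show 2*a - (2*a) = (0:ℝ) by ring, mul_zero]
  · rw [hnorm]
    have h1 : K/(4*Real.log 2) ≤ M0 := by
      rw [hM0def]; exact le_trans (le_max_left _ _) (le_max_left _ _)
    have h2 : K/(4*Real.log 2) < b^2 := lt_of_le_of_lt h1 hb2
    have h3 : K < b^2 * (4*Real.log 2) := (div_lt_iff₀ (by positivity)).1 h2
    linarith
  · have h1 : 10*C0/a^2 ≤ M0 := by
      rw [hM0def]; exact le_trans (le_max_right _ _) (le_max_left _ _)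
    have h2 : 10*C0/a^2 < b^2 := lt_of_le_of_lt h1 hb2
    have h3 : 10*C0 < b^2 * a^2 := (div_lt_iff₀ (by positivity)).1 h2
    have hneg : C0 - a^2*b^2/10 < 0 := by
      have h4 : a^2*b^2 = b^2*a^2 := by ring
      linarith
    have hfin : b ^ 2 * (C0 - a ^ 2 * b ^ 2 / 10) < 0 :=
      mul_neg_of_pos_of_neg (by positivity) hneg
    exact lt_of_le_of_lt haction hfin
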